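/- Let ≺ be a computable linear order on ℕ isomorphic to (ℕ,<) via the isomorphism φ, and let f : ℕ → ℕ be computable. Then the image function f_φ = φ ∘ f ∘ φ⁻¹ is Turing reducible to the image Succ_φ = φ ∘ S ∘ φ⁻¹ of the successor function S(n) = n+1. -/

import Mathlib

/-- Oracle computability: partial recursive in the total oracle `O`. -/
inductive OracleRecursiveIn (O : ℕ → ℕ) : (ℕ →. ℕ) → Prop
  | zero : OracleRecursiveIn O fun _ => 0
  | succ : OracleRecursiveIn O Nat.succ
  | left : OracleRecursiveIn O fun n => (Nat.unpair n).1
  | right : OracleRecursiveIn O fun n => (Nat.unpair n).2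
  | oracle : OracleRecursiveIn O O
  | pair {f g : ℕ →. ℕ} : OracleRecursiveIn O f → OracleRecursiveIn O g →
      OracleRecursiveIn O fun n => Nat.pair <$> f n <*> g n
  | comp {f g : ℕ →. ℕ} : OracleRecursiveIn O f → OracleRecursiveIn O g →
      OracleRecursiveIn O fun n => g n >>= f
  | prec {f g : ℕ →. ℕ} : OracleRecursiveIn O f → OracleRecursiveIn O g →
      OracleRecursiveIn O (Nat.unpaired fun a n =>
        n.rec (f a) fun y IH => do let i ← IH; g (Nat.pair a (Nat.pair y i)))
  | rfind {f : ℕ →. ℕ} : OracleRecursiveIn O f →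
      OracleRecursiveIn O fun a =>
        Nat.rfind fun n => (fun m => m = 0) <$> f (Nat.pair a n)

/-- Turing reducibility between total functions on ℕ. -/
def TotalTuringReducible (f g : ℕ → ℕ) : Prop := OracleRecursiveIn g f

/-- Turing equivalence between total functions on ℕ. -/
def TuringEquiv (f g : ℕ → ℕ) : Prop := TotalTuringReducible f g ∧ TotalTuringReducible g f

theorem OracleRecursiveIn.of_partrec {O : ℕ → ℕ} {f : ℕ →. ℕ} (h : Nat.Partrec f) :
    OracleRecursiveIn O f := by
  induction h with
  | zero => exact .zero
  | succ => exact .succ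
  | left => exact .left
  | right => exact .right
  | pair _ _ ih1 ih2 => exact .pair ih1 ih2
  | comp _ _ ih1 ih2 => exact .comp ih1 ih2
  | prec _ _ ih1 ih2 => exact .prec ih1 ih2
  | rfind _ ih => exact .rfind ih

theorem OracleRecursiveIn.of_computable {O f : ℕ → ℕ} (h : Computable f) :
    OracleRecursiveIn O (f : ℕ →. ℕ) :=
  .of_partrec (Partrec.nat_iff.1 h.partrec)

theorem OracleRecursiveIn.totalComp {O f g : ℕ → ℕ} (hf : OracleRecursiveIn O (f : ℕ →. ℕ))
    (hg : OracleRecursiveIn O (g : ℕ →. ℕ)) :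
    OracleRecursiveIn O (((fun n => f (g n)) : ℕ → ℕ) : ℕ →. ℕ) := by
  have := OracleRecursiveIn.comp hf hg
  have e : (fun n => (g : ℕ →. ℕ) n >>= (f : ℕ →. ℕ))
      = (((fun n => f (g n)) : ℕ → ℕ) : ℕ →. ℕ) := by
    funext n; simp [PFun.coe_val]; exact Part.bind_some _ _
  rwa [e] at this

theorem OracleRecursiveIn.totalPair {O f g : ℕ → ℕ} (hf : OracleRecursiveIn O (f : ℕ →. ℕ))
    (hg : OracleRecursiveIn O (g : ℕ →. ℕ)) :
    OracleRecursiveIn O (((fun n => Nat.pair (f n) (g n)) : ℕ → ℕ) : ℕ →. ℕ) := by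
  have := OracleRecursiveIn.pair hf hg
  have e : (fun n => Nat.pair <$> (f : ℕ →. ℕ) n <*> (g : ℕ →. ℕ) n)
      = (((fun n => Nat.pair (f n) (g n)) : ℕ → ℕ) : ℕ →. ℕ) := by
    funext n; simp [Seq.seq, PFun.coe_val]
  rwa [e] at this

/-- Let `r` be a computable linear order on ℕ isomorphic to `(ℕ, <)` via `φ`, and let
`f` be computable. Then the image `φ ∘ f ∘ φ⁻¹` of `f` is Turing reducible to the image
`φ ∘ S ∘ φ⁻¹` of the successor function `S(n) = n + 1`. -/
theorem image_reducible_to_successor_image (r : ℕ → ℕ → Prop)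
    (hlin : IsStrictTotalOrder ℕ r)
    (χ : ℕ → ℕ → Bool) (hχ : Computable fun p : ℕ × ℕ => χ p.1 p.2)
    (hχr : ∀ x y, r x y ↔ χ x y = true)
    (φ : ℕ ≃ ℕ) (hiso : ∀ x y, x < y ↔ r (φ x) (φ y))
    (f : ℕ → ℕ) (hf : Computable f) :
    TotalTuringReducible (fun a => φ (f (φ.symm a))) (fun a => φ (φ.symm a + 1)) := by
  set O : ℕ → ℕ := fun a => φ (φ.symm a + 1) with hOdef
  have hOφ : ∀ n, O (φ n) = φ (n + 1) := fun n => by simp [hOdef]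
  -- φ is recursive in O
  have hg0 : OracleRecursiveIn O
      (((fun m => O ((Nat.unpair (Nat.unpair m).2).2)) : ℕ → ℕ) : ℕ →. ℕ) :=
    OracleRecursiveIn.totalComp .oracle
      (.of_computable (Computable.snd.comp (Computable.unpair.comp
        (Computable.snd.comp Computable.unpair))))
  have hP : OracleRecursiveIn O (Nat.unpaired fun a n =>
      n.rec (((fun _ => φ 0 : ℕ → ℕ) : ℕ →. ℕ) a) fun y IH => do
        let i ← IH
        (((fun m => O ((Nat.unpair (Nat.unpair m).2).2)) : ℕ → ℕ) : ℕ →. ℕ)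
          (Nat.pair a (Nat.pair y i))) :=
    OracleRecursiveIn.prec (.of_computable (Computable.const (φ 0))) hg0
  have hPval : ∀ n : ℕ, (Nat.unpaired fun a n =>
      n.rec (((fun _ => φ 0 : ℕ → ℕ) : ℕ →. ℕ) a) fun y IH => do
        let i ← IH
        (((fun m => O ((Nat.unpair (Nat.unpair m).2).2)) : ℕ → ℕ) : ℕ →. ℕ)
          (Nat.pair a (Nat.pair y i))) (Nat.pair 0 n) = Part.some (φ n) := by
    intro n
    induction n with
    | zero => simp [Nat.unpaired, PFun.coe_val]
    | succ k ih =>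
      simp only [Nat.unpaired, Nat.unpair_pair] at ih ⊢
      rw [ih]
      simp [PFun.coe_val, hOφ k]
  have hφ : OracleRecursiveIn O ((φ : ℕ → ℕ) : ℕ →. ℕ) := by
    have hpair0 : Computable (fun n => (Nat.pair 0 n : ℕ)) :=
      (Primrec₂.natPair.comp (Primrec.const 0) Primrec.id).to_comp
    have := OracleRecursiveIn.comp hP (.of_computable hpair0)
    have e : (fun n => (((fun n => (Nat.pair 0 n : ℕ)) : ℕ → ℕ) : ℕ →. ℕ) n >>=
        (Nat.unpaired fun a n =>
          n.rec (((fun _ => φ 0 : ℕ → ℕ) : ℕ →. ℕ) a) fun y IH => do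
            let i ← IH
            (((fun m => O ((Nat.unpair (Nat.unpair m).2).2)) : ℕ → ℕ) : ℕ →. ℕ)
              (Nat.pair a (Nat.pair y i))))
        = ((φ : ℕ → ℕ) : ℕ →. ℕ) := by
      funext n
      have h0 : (((fun n => (Nat.pair 0 n : ℕ)) : ℕ → ℕ) : ℕ →. ℕ) n
          = Part.some (Nat.pair 0 n) := rfl
      rw [h0, Part.bind_eq_bind, Part.bind_some]
      exact hPval n
    rwa [e] at this
  -- φ.symm is recursive in O
  have hq : OracleRecursiveIn O (((fun m => Nat.pair (Nat.unpair m).1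
      (φ ((Nat.unpair m).2))) : ℕ → ℕ) : ℕ →. ℕ) :=
    OracleRecursiveIn.totalPair .left (OracleRecursiveIn.totalComp hφ .right)
  have he : Computable (fun k => (if (Nat.unpair k).2 = (Nat.unpair k).1
      then 0 else 1 : ℕ)) := by
    have hp : PrimrecPred (fun k : ℕ => (Nat.unpair k).2 = (Nat.unpair k).1) :=
      Primrec.eq.comp (Primrec.snd.comp Primrec.unpair)
        (Primrec.fst.comp Primrec.unpair)
    exact (Primrec.ite hp (Primrec.const 0) (Primrec.const 1)).to_comp
  have hF : OracleRecursiveIn O (((fun m =>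
      (if φ ((Nat.unpair m).2) = (Nat.unpair m).1 then 0 else 1 : ℕ)) : ℕ → ℕ)
        : ℕ →. ℕ) := by
    have := OracleRecursiveIn.totalComp (.of_computable he) hq
    simpa using this
  have hinv : OracleRecursiveIn O (((fun a => φ.symm a) : ℕ → ℕ) : ℕ →. ℕ) := by
    have := OracleRecursiveIn.rfind hF
    have e : (fun a => Nat.rfind fun n => (fun m => m = 0) <$>
        (((fun m => (if φ ((Nat.unpair m).2) = (Nat.unpair m).1 then 0 else 1 : ℕ))
          : ℕ → ℕ) : ℕ →. ℕ) (Nat.pair a n))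
        = (((fun a => φ.symm a) : ℕ → ℕ) : ℕ →. ℕ) := by
      funext a
      apply Part.eq_some_iff.2
      apply Nat.mem_rfind.2
      constructor
      · simp [Part.mem_some_iff, PFun.coe_val]
      · intro m hm
        have hne : φ m ≠ a := by
          intro h
          have : m = φ.symm a := by
            have := congrArg φ.symm h
            simpa using this
          have hm' : m < φ.symm a := hm
          omega
        simp [Part.mem_some_iff, PFun.coe_val, hne]
    rwa [e] at this
  have final := OracleRecursiveIn.totalComp (OracleRecursiveIn.totalComp hφ (.of_computable hf)) hinv
  exact final
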